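/- For every natural number n, Nat.catalan (n + 1) = Σ_{x = 0}^{n} Σ_{y = 0}^{⌊(n − x)/2⌋} (n choose x) · ((n − x) choose 2y) · Nat.catalan y. -/

import Mathlib

open Finset

namespace Stmt11Aux

/-- Column hockey stick on `range`. -/
lemma sum_range_choose_col (N p : ℕ) :
    ∑ i ∈ range (N + 1), i.choose p = (N + 1).choose (p + 1) := by
  rw [← Nat.sum_Icc_choose]
  refine (sum_subset ?_ ?_).symm
  · intro x hx; simp only [mem_Icc] at hx; simp only [mem_range]; omega
  · intro x hx1 hx2
    simp only [mem_range] at hx1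
    rcases Nat.lt_or_ge x p with h | h
    · exact Nat.choose_eq_zero_of_lt h
    · exact absurd (mem_Icc.mpr ⟨h, by omega⟩) hx2

/-- Diagonal Vandermonde identity. -/
lemma vand (p m : ℕ) : ∀ q, ∑ i ∈ range (m + 1), i.choose p * (m - i).choose q
    = (m + 1).choose (p + q + 1) := by
  induction m with
  | zero =>
    intro q
    rw [range_one, sum_singleton]
    rcases p with _ | p <;> rcases q with _ | q <;>
      simp [Nat.choose_eq_zero_of_lt, Nat.lt_succ_of_lt]
  | succ m ih =>
    intro q
    rcases q with _ | q
    · simp only [Nat.choose_zero_right, mul_one, Nat.add_zero]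
      exact sum_range_choose_col (m + 1) p
    · rw [sum_range_succ]
      have h1 : ∀ i ∈ range (m + 1),
          i.choose p * (m + 1 - i).choose (q + 1)
          = i.choose p * (m - i).choose q + i.choose p * (m - i).choose (q + 1) := by
        intro i hi
        simp only [mem_range] at hi
        have : m + 1 - i = (m - i) + 1 := by omega
        rw [this, Nat.choose_succ_succ, Nat.mul_add]
      rw [sum_congr rfl h1, sum_add_distrib, ih q, ih (q + 1)]
      have : (m + 1).choose p * (m + 1 - (m + 1)).choose (q + 1) = 0 := by
        simp [Nat.choose_eq_zero_of_lt]
      rw [this, Nat.add_zero]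
      have : p + (q + 1) + 1 = (p + q + 1) + 1 := by omega
      rw [this, Nat.choose_succ_succ (m + 1) (p + q + 1)]

/-- Trinomial revision, unconditional over `ℕ`. -/
lemma trinom (n x k : ℕ) : n.choose x * (n - x).choose k = n.choose k * (n - k).choose x := by
  rcases le_or_gt (x + k) n with h | h
  · have h1 : n.choose (x + k) * (x + k).choose x = n.choose x * (n - x).choose k := by
      have := Nat.choose_mul (n := n) (k := x + k) (s := x) (Nat.le_add_right _ _)
      rwa [Nat.add_sub_cancel_left] at this
    have h2 : n.choose (x + k) * (x + k).choose k = n.choose k * (n - k).choose x := by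
      have := Nat.choose_mul (n := n) (k := x + k) (s := k) (Nat.le_add_left _ _)
      rwa [Nat.add_sub_cancel] at this
    have h3 : (x + k).choose x = (x + k).choose k := by
      have := Nat.choose_symm (n := x + k) (k := k) (Nat.le_add_left _ _)
      rwa [Nat.add_sub_cancel] at this
    rw [← h1, h3, h2]
  · rcases Nat.lt_or_ge n x with hx | hx
    · rw [Nat.choose_eq_zero_of_lt hx, Nat.choose_eq_zero_of_lt (show n - k < x by omega),
        Nat.zero_mul, Nat.mul_zero]
    rcases Nat.lt_or_ge n k with hk | hk
    · rw [Nat.choose_eq_zero_of_lt hk, Nat.choose_eq_zero_of_lt (show n - x < k by omega),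
        Nat.mul_zero, Nat.zero_mul]
    · rw [Nat.choose_eq_zero_of_lt (show n - x < k by omega),
        Nat.choose_eq_zero_of_lt (show n - k < x by omega), Nat.mul_zero, Nat.mul_zero]

def u (n : ℕ) : ℕ := ∑ k ∈ range (n + 1), n.choose (2 * k) * 2 ^ (n - 2 * k) * catalan k

def v (n : ℕ) : ℕ :=
  ∑ k ∈ range (n + 1), n.choose (2 * k + 1) * 2 ^ (n - (2 * k + 1)) * catalan (k + 1)

lemma u_zero : u 0 = 1 := by simp [u]

lemma u_succ (n : ℕ) : u (n + 1) = 2 * u n + v n := by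
  rw [u, sum_range_succ']
  have e0 : (n + 1).choose (2 * 0) * 2 ^ (n + 1 - 2 * 0) * catalan 0 = 2 ^ (n + 1) := by simp
  rw [e0]
  have e1 : ∀ k ∈ range (n + 1),
      (n + 1).choose (2 * (k + 1)) * 2 ^ (n + 1 - 2 * (k + 1)) * catalan (k + 1)
      = n.choose (2 * k + 1) * 2 ^ (n - (2 * k + 1)) * catalan (k + 1)
        + n.choose (2 * k + 1 + 1) * 2 ^ (n - (2 * k + 1)) * catalan (k + 1) := by
    intro k _
    have hexp : n + 1 - 2 * (k + 1) = n - (2 * k + 1) := by omega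
    have h2 : 2 * (k + 1) = (2 * k + 1) + 1 := by ring
    rw [hexp, h2, Nat.choose_succ_succ, Nat.add_mul, Nat.add_mul]
  rw [sum_congr rfl e1, sum_add_distrib]
  have e2 : ∑ k ∈ range (n + 1),
      n.choose (2 * k + 1) * 2 ^ (n - (2 * k + 1)) * catalan (k + 1) = v n := rfl
  have e3 : 2 * u n = 2 ^ (n + 1)
      + ∑ k ∈ range n, n.choose (2 * k + 1 + 1) * 2 ^ (n - (2 * k + 1)) * catalan (k + 1) := by
    rw [u, Nat.mul_comm 2, sum_mul, sum_range_succ']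
    have f0 : n.choose (2 * 0) * 2 ^ (n - 2 * 0) * catalan 0 * 2 = 2 ^ (n + 1) := by
      simp [pow_succ, Nat.mul_comm]
    rw [f0]
    have f1 : ∀ k ∈ range n,
        n.choose (2 * (k + 1)) * 2 ^ (n - 2 * (k + 1)) * catalan (k + 1) * 2
        = n.choose (2 * k + 1 + 1) * 2 ^ (n - (2 * k + 1)) * catalan (k + 1) := by
      intro k _
      have h2 : 2 * (k + 1) = 2 * k + 1 + 1 := by ring
      rw [h2]
      rcases Nat.lt_or_ge n (2 * k + 1 + 1) with h | h
      · rw [Nat.choose_eq_zero_of_lt h]; ring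
      · have : n - (2 * k + 1) = (n - (2 * k + 1 + 1)) + 1 := by omega
        rw [this, pow_succ]; ring
    rw [sum_congr rfl f1, Nat.add_comm]
  have e4 : ∑ k ∈ range (n + 1),
      n.choose (2 * k + 1 + 1) * 2 ^ (n - (2 * k + 1)) * catalan (k + 1)
      = ∑ k ∈ range n, n.choose (2 * k + 1 + 1) * 2 ^ (n - (2 * k + 1)) * catalan (k + 1) := by
    rw [sum_range_succ, Nat.choose_eq_zero_of_lt (by omega), Nat.zero_mul, Nat.zero_mul,
      Nat.add_zero]
  rw [e2, e4, e3]
  omega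

lemma catalan_succ'' (k : ℕ) :
    catalan (k + 1) = ∑ a ∈ range (k + 1), catalan a * catalan (k - a) := by
  rw [catalan_succ']
  exact Finset.Nat.sum_antidiagonal_eq_sum_range_succ_mk _ k

lemma tri {M : Type*} [AddCommMonoid M] (f : ℕ → ℕ → M) (N : ℕ) :
    ∑ k ∈ range N, ∑ a ∈ range (k + 1), f a (k - a)
      = ∑ a ∈ range N, ∑ b ∈ range (N - a), f a b := by
  induction N with
  | zero => simp
  | succ N ih =>
    rw [sum_range_succ, ih]
    have h1 : ∀ a ∈ range (N + 1), ∑ b ∈ range (N + 1 - a), f a b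
        = ∑ b ∈ range (N - a), f a b + f a (N - a) := by
      intro a ha
      simp only [mem_range] at ha
      have h : N + 1 - a = (N - a) + 1 := by omega
      rw [h, sum_range_succ]
    rw [sum_congr rfl h1, sum_add_distrib,
      sum_range_succ (fun a => ∑ b ∈ range (N - a), f a b) N]
    simp

/-- the common normal form -/
def E (m : ℕ) : ℕ :=
  ∑ a ∈ range (m + 1), ∑ b ∈ range (m + 1),
    (m + 1).choose (2 * (a + b) + 1) * (2 ^ (m + 1 - (2 * (a + b) + 1)) * (catalan a * catalan b))

lemma lhs_eq (m : ℕ) : v (m + 1) = E m := by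
  have f0 : ∀ a b : ℕ, m + 1 ≤ a + b →
      (m + 1).choose (2 * (a + b) + 1)
        * (2 ^ (m + 1 - (2 * (a + b) + 1)) * (catalan a * catalan b)) = 0 := by
    intro a b h
    rw [Nat.choose_eq_zero_of_lt (by omega), Nat.zero_mul]
  -- extend the sum
  have e1 : v (m + 1) = ∑ k ∈ range (2 * (m + 1) + 1),
      (m + 1).choose (2 * k + 1) * 2 ^ (m + 1 - (2 * k + 1)) * catalan (k + 1) := by
    refine sum_subset (by intro x hx; simp only [mem_range] at *; omega) ?_
    intro k _ hk
    simp only [mem_range] at hk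
    rw [Nat.choose_eq_zero_of_lt (by omega), Nat.zero_mul, Nat.zero_mul]
  rw [e1]
  have e2 : ∀ k ∈ range (2 * (m + 1) + 1),
      (m + 1).choose (2 * k + 1) * 2 ^ (m + 1 - (2 * k + 1)) * catalan (k + 1)
      = ∑ a ∈ range (k + 1),
        (m + 1).choose (2 * (a + (k - a)) + 1)
          * (2 ^ (m + 1 - (2 * (a + (k - a)) + 1)) * (catalan a * catalan (k - a))) := by
    intro k _
    rw [catalan_succ'' k, Finset.mul_sum]
    refine sum_congr rfl ?_
    intro a ha
    simp only [mem_range] at ha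
    have h : a + (k - a) = k := by omega
    rw [h]; ring
  rw [sum_congr rfl e2,
    tri (fun a b => (m + 1).choose (2 * (a + b) + 1)
      * (2 ^ (m + 1 - (2 * (a + b) + 1)) * (catalan a * catalan b))) (2 * (m + 1) + 1)]
  -- now shrink the double sum to `range (m+1) × range (m+1)`
  rw [E]
  have s1 : ∑ a ∈ range (m + 1), ∑ b ∈ range (2 * (m + 1) + 1 - a),
        (m + 1).choose (2 * (a + b) + 1)
          * (2 ^ (m + 1 - (2 * (a + b) + 1)) * (catalan a * catalan b))
      = ∑ a ∈ range (2 * (m + 1) + 1), ∑ b ∈ range (2 * (m + 1) + 1 - a),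
        (m + 1).choose (2 * (a + b) + 1)
          * (2 ^ (m + 1 - (2 * (a + b) + 1)) * (catalan a * catalan b)) := by
    refine sum_subset (by intro x hx; simp only [mem_range] at *; omega) ?_
    intro a _ ha
    simp only [mem_range, not_lt] at ha
    exact sum_eq_zero fun b _ => f0 a b (by omega)
  rw [← s1]
  refine sum_congr rfl ?_
  intro a ha
  simp only [mem_range] at ha
  have s2 : ∑ b ∈ range (m + 1),
        (m + 1).choose (2 * (a + b) + 1)
          * (2 ^ (m + 1 - (2 * (a + b) + 1)) * (catalan a * catalan b))
      = ∑ b ∈ range (2 * (m + 1) + 1 - a),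
        (m + 1).choose (2 * (a + b) + 1)
          * (2 ^ (m + 1 - (2 * (a + b) + 1)) * (catalan a * catalan b)) := by
    refine sum_subset (by intro x hx; simp only [mem_range] at *; omega) ?_
    intro b _ hb
    simp only [mem_range, not_lt] at hb
    exact f0 a b (by omega)
  exact s2.symm

lemma rhs_eq (m : ℕ) : ∑ i ∈ range (m + 1), u i * u (m - i) = E m := by
  have hu1 : ∀ i ∈ range (m + 1),
      u i = ∑ a ∈ range (m + 1), i.choose (2 * a) * 2 ^ (i - 2 * a) * catalan a := by
    intro i hi
    simp only [mem_range] at hi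
    refine sum_subset (by intro x hx; simp only [mem_range] at *; omega) ?_
    intro a _ ha
    simp only [mem_range, not_lt] at ha
    rw [Nat.choose_eq_zero_of_lt (by omega), Nat.zero_mul, Nat.zero_mul]
  have hu2 : ∀ i ∈ range (m + 1),
      u (m - i) = ∑ b ∈ range (m + 1),
        (m - i).choose (2 * b) * 2 ^ (m - i - 2 * b) * catalan b := by
    intro i hi
    simp only [mem_range] at hi
    refine sum_subset (by intro x hx; simp only [mem_range] at *; omega) ?_
    intro b _ hb
    simp only [mem_range, not_lt] at hb
    rw [Nat.choose_eq_zero_of_lt (by omega), Nat.zero_mul, Nat.zero_mul]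
  have step1 : ∀ i ∈ range (m + 1), u i * u (m - i)
      = ∑ a ∈ range (m + 1), ∑ b ∈ range (m + 1),
          i.choose (2 * a) * (m - i).choose (2 * b)
            * (2 ^ (m + 1 - (2 * (a + b) + 1)) * (catalan a * catalan b)) := by
    intro i hi
    rw [hu1 i hi, hu2 i hi, sum_mul_sum]
    simp only [mem_range] at hi
    refine sum_congr rfl fun a _ => sum_congr rfl fun b _ => ?_
    rcases Nat.lt_or_ge i (2 * a) with h1 | h1
    · rw [Nat.choose_eq_zero_of_lt h1]; ring
    rcases Nat.lt_or_ge (m - i) (2 * b) with h2 | h2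
    · rw [Nat.choose_eq_zero_of_lt h2]; ring
    have hexp : (i - 2 * a) + (m - i - 2 * b) = m + 1 - (2 * (a + b) + 1) := by omega
    calc i.choose (2 * a) * 2 ^ (i - 2 * a) * catalan a
          * ((m - i).choose (2 * b) * 2 ^ (m - i - 2 * b) * catalan b)
        = i.choose (2 * a) * (m - i).choose (2 * b)
            * (2 ^ (i - 2 * a) * 2 ^ (m - i - 2 * b) * (catalan a * catalan b)) := by ring
      _ = i.choose (2 * a) * (m - i).choose (2 * b)
            * (2 ^ (m + 1 - (2 * (a + b) + 1)) * (catalan a * catalan b)) := by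
          rw [← pow_add, hexp]
  rw [sum_congr rfl step1]
  rw [sum_comm]
  refine Eq.trans (sum_congr rfl fun a _ => sum_comm) ?_
  rw [E]
  refine sum_congr rfl fun a _ => sum_congr rfl fun b _ => ?_
  rw [← sum_mul, vand (2 * a) m (2 * b)]
  have h : 2 * a + 2 * b + 1 = 2 * (a + b) + 1 := by ring
  rw [h]

lemma v_eq (n : ℕ) : v n = ∑ i ∈ range n, u i * u (n - 1 - i) := by
  cases n with
  | zero => simp [v]
  | succ m =>
    rw [lhs_eq, ← rhs_eq]
    refine sum_congr rfl fun i _ => ?_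
    congr 1

theorem u_eq : ∀ n, u n = catalan (n + 1) := by
  intro n
  induction n using Nat.strong_induction_on with
  | _ n ih =>
    match n with
    | 0 => simp [u_zero]
    | (m + 1) =>
      rw [u_succ, v_eq, ih m (by omega)]
      have hterm : ∀ i ∈ range m, u i * u (m - 1 - i)
          = catalan (i + 1) * catalan (m - i) := by
        intro i hi
        simp only [mem_range] at hi
        rw [ih i (by omega), ih (m - 1 - i) (by omega)]
        congr 2
        omega
      rw [sum_congr rfl hterm]
      rw [catalan_succ'' (m + 1), sum_range_succ']
      have h1 : ∀ j ∈ range (m + 1),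
          catalan (j + 1) * catalan (m + 1 - (j + 1)) = catalan (j + 1) * catalan (m - j) := by
        intro j _
        congr 2
        omega
      rw [sum_congr rfl h1, sum_range_succ]
      simp only [Nat.sub_self, catalan_zero, Nat.mul_one, Nat.choose_zero_right]
      have : catalan (m + 1 - 0) = catalan (m + 1) := rfl
      omega

theorem touchard (n : ℕ) : catalan (n + 1) = u n := (u_eq n).symm

end Stmt11Aux

/-- The Catalan number identity
`C (n+1) = ∑_{x=0}^{n} ∑_{y=0}^{⌊(n-x)/2⌋} (n choose x) ((n-x) choose 2y) C y`. -/
theorem stmt_11 (n : ℕ) :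
    catalan (n + 1) =
      ∑ x ∈ Finset.range (n + 1), ∑ y ∈ Finset.range ((n - x) / 2 + 1),
        n.choose x * (n - x).choose (2 * y) * catalan y := by
  rw [Stmt11Aux.touchard, Stmt11Aux.u]
  -- extend the inner sums to `range (n+1)`
  have e1 : ∀ x ∈ range (n + 1),
      ∑ y ∈ range ((n - x) / 2 + 1), n.choose x * (n - x).choose (2 * y) * catalan y
      = ∑ y ∈ range (n + 1), n.choose x * (n - x).choose (2 * y) * catalan y := by
    intro x hx
    simp only [mem_range] at hx
    refine sum_subset (by intro z hz; simp only [mem_range] at *; omega) ?_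
    intro y _ hy
    simp only [mem_range, not_lt] at hy
    rw [Nat.choose_eq_zero_of_lt (show n - x < 2 * y by omega), Nat.mul_zero, Nat.zero_mul]
  rw [sum_congr rfl e1, sum_comm]
  refine (sum_congr rfl fun y _ => ?_).symm
  have e2 : ∀ x ∈ range (n + 1),
      n.choose x * (n - x).choose (2 * y) * catalan y
      = (n - 2 * y).choose x * (n.choose (2 * y) * catalan y) := by
    intro x _
    rw [Stmt11Aux.trinom n x (2 * y)]
    ring
  rw [sum_congr rfl e2, ← sum_mul]
  rcases le_or_gt (2 * y) n with h | h
  · have e3 : ∑ x ∈ range (n + 1), (n - 2 * y).choose x = 2 ^ (n - 2 * y) := by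
      rw [← Nat.sum_range_choose (n - 2 * y)]
      refine (sum_subset (by intro z hz; simp only [mem_range] at *; omega) ?_).symm
      intro x hx1 hx2
      simp only [mem_range, not_lt] at hx1 hx2
      exact Nat.choose_eq_zero_of_lt (by omega)
    rw [e3]; ring
  · rw [Nat.choose_eq_zero_of_lt h]
    ring
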